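/- In the poset of dominant coweights of a simple ADE Lie algebra (ordered by λ ≤ λ' iff λ' − λ is a nonnegative rational combination with α_i(λ'−λ) ≥ 0 for all i, restricted to coroot lattice elements), any coweight λ whose Dynkin label is nonzero on an internal node of the Dynkin diagram of valence L > 1 has at least two distinct covers from above: there exist at least two distinct positive coroots θ, θ' with λ + θ and λ + θ' dominant. -/

import Mathlib

open Matrix

section CorootAux

variable {r : ℕ}

private lemma qexpand {α : Type*} [CommRing α] (M : Matrix (Fin r) (Fin r) α)
    (x y : Fin r → α) (s : α) :
    (x + s • y) ⬝ᵥ M *ᵥ (x + s • y) =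
      x ⬝ᵥ M *ᵥ x + s * (x ⬝ᵥ M *ᵥ y) + s * (y ⬝ᵥ M *ᵥ x) + s ^ 2 * (y ⬝ᵥ M *ᵥ y) := by
  rw [Matrix.mulVec_add, Matrix.mulVec_smul]
  simp only [dotProduct_add, add_dotProduct, dotProduct_smul,
    smul_dotProduct, smul_eq_mul]
  ring

private lemma bsymm {α : Type*} [CommRing α] {M : Matrix (Fin r) (Fin r) α}
    (h : Mᵀ = M) (x y : Fin r → α) : x ⬝ᵥ M *ᵥ y = y ⬝ᵥ M *ᵥ x := by
  rw [Matrix.dotProduct_mulVec, ← Matrix.mulVec_transpose, h, dotProduct_comm]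

private lemma cast_mulVec (C : Matrix (Fin r) (Fin r) ℤ) (t : Fin r → ℤ) :
    (C.map ((↑) : ℤ → ℚ)) *ᵥ (fun n => (t n : ℚ)) = fun m => ((C *ᵥ t) m : ℚ) := by
  funext m
  simp [Matrix.mulVec, dotProduct, Matrix.map_apply]

private lemma cast_q (C : Matrix (Fin r) (Fin r) ℤ) (t : Fin r → ℤ) :
    (fun n => (t n : ℚ)) ⬝ᵥ (C.map ((↑) : ℤ → ℚ)) *ᵥ (fun n => (t n : ℚ))
      = ((t ⬝ᵥ C *ᵥ t : ℤ) : ℚ) := by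
  rw [cast_mulVec]
  simp [dotProduct, Matrix.mulVec]

variable {C : Matrix (Fin r) (Fin r) ℤ}
  (hpd : ∀ x : Fin r → ℚ, x ≠ 0 →
      0 < dotProduct x ((C.map (Int.cast : ℤ → ℚ)).mulVec x))

include hpd in
private lemma qpos {t : Fin r → ℤ} (ht : t ≠ 0) : 0 < t ⬝ᵥ C *ᵥ t := by
  have hx : (fun n => (t n : ℚ)) ≠ 0 := by
    intro h
    apply ht
    funext n
    have := congrFun h n
    simpa using this
  have h := hpd _ hx
  have h2 := cast_q C t
  rw [dotProduct, dotProduct] at h2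
  rw [dotProduct] at h
  rw [h2] at h
  exact_mod_cast h

include hpd in
private lemma qnonneg (x : Fin r → ℚ) :
    0 ≤ x ⬝ᵥ (C.map ((↑) : ℤ → ℚ)) *ᵥ x := by
  by_cases hx : x = 0
  · simp [hx]
  · exact le_of_lt (hpd x hx)

include hpd in
private lemma label_bound (hsym : Cᵀ = C) {t : Fin r → ℤ}
    (hq : t ⬝ᵥ C *ᵥ t = 2) (m : Fin r) (hdiag : C m m = 2) :
    (C *ᵥ t) m ∈ Set.Icc (-2 : ℤ) 2 := by
  set c : ℤ := (C *ᵥ t) m with hc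
  set Q : Matrix (Fin r) (Fin r) ℚ := C.map ((↑) : ℤ → ℚ) with hQ
  have hQsym : Qᵀ = Q := by
    rw [hQ, ← Matrix.transpose_map, hsym]
  set tq : Fin r → ℚ := fun n => (t n : ℚ) with htq
  set em : Fin r → ℚ := Pi.single m 1 with hem
  have hBem : (Q *ᵥ tq) m = (c : ℚ) := by
    rw [hQ, htq, cast_mulVec]
  have h1 : em ⬝ᵥ Q *ᵥ tq = (c : ℚ) := by
    rw [hem, single_dotProduct, hBem, one_mul]
  have h2 : tq ⬝ᵥ Q *ᵥ em = (c : ℚ) := by rw [bsymm hQsym]; exact h1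
  have h3 : em ⬝ᵥ Q *ᵥ em = 2 := by
    rw [hem, single_dotProduct, Matrix.mulVec_single]
    simp [hQ, Matrix.map_apply, hdiag]
  have h4 : tq ⬝ᵥ Q *ᵥ tq = 2 := by
    rw [hQ, htq, cast_q, hq]; norm_num
  have key := qnonneg hpd (tq + (-(c : ℚ)/2) • em)
  rw [qexpand, h1, h2, h3, h4] at key
  have hc2 : (c : ℚ)^2 ≤ 4 := by nlinarith
  have : c^2 ≤ 4 := by exact_mod_cast hc2
  constructor <;> nlinarith

private lemma q_add_single (hsym : Cᵀ = C) (hdiag : ∀ n, C n n = 2) (t : Fin r → ℤ) (m : Fin r) :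
    (t + Pi.single m 1) ⬝ᵥ C *ᵥ (t + Pi.single m 1)
      = t ⬝ᵥ C *ᵥ t + 2 * (C *ᵥ t) m + 2 := by
  have h0 : t + Pi.single m 1 = t + (1 : ℤ) • Pi.single m 1 := by simp
  rw [h0, qexpand]
  have h1 : (Pi.single m 1 : Fin r → ℤ) ⬝ᵥ C *ᵥ t = (C *ᵥ t) m := by
    rw [single_dotProduct, one_mul]
  have h2 : t ⬝ᵥ C *ᵥ (Pi.single m 1 : Fin r → ℤ) = (C *ᵥ t) m := by
    rw [bsymm hsym]; exact h1
  have h3 : (Pi.single m 1 : Fin r → ℤ) ⬝ᵥ C *ᵥ (Pi.single m 1 : Fin r → ℤ) = 2 := by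
    rw [single_dotProduct, Matrix.mulVec_single]
    simp [hdiag m]
  rw [h1, h2, h3]; ring

include hpd in
private lemma neg_one_le (hsym : Cᵀ = C) (hdiag : ∀ n, C n n = 2)
    {t : Fin r → ℤ} (hnn : ∀ n, 0 ≤ t n) (hq : t ⬝ᵥ C *ᵥ t = 2) (m : Fin r) :
    -1 ≤ (C *ᵥ t) m := by
  by_contra h
  push_neg at h
  have hc : (C *ᵥ t) m ≤ -2 := by omega
  have hne : t + Pi.single m 1 ≠ 0 := by
    intro h0
    have := congrFun h0 m
    simp at this
    have := hnn m
    omega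
  have := qpos hpd hne
  rw [q_add_single hsym hdiag, hq] at this
  omega

end CorootAux

/-- A positive coroot of a simply-laced root system with (symmetric) Cartan matrix
`C`, written in simple-coroot coordinates: a nonzero vector with nonnegative
coordinates and squared length `2` with respect to the Gram matrix `C`. -/
def IsPosCoroot {r : ℕ} (C : Matrix (Fin r) (Fin r) ℤ) (t : Fin r → ℤ) : Prop :=
  (∀ j, 0 ≤ t j) ∧ t ≠ 0 ∧ dotProduct t (C.mulVec t) = 2

section CorootAux2

variable {r : ℕ} {C : Matrix (Fin r) (Fin r) ℤ}
  (hpd : ∀ x : Fin r → ℚ, x ≠ 0 →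
      0 < dotProduct x ((C.map (Int.cast : ℤ → ℚ)).mulVec x))

include hpd in
private lemma step (hsym : Cᵀ = C) (hdiag : ∀ n, C n n = 2)
    {t : Fin r → ℤ} (hnn : ∀ n, 0 ≤ t n) (hq : t ⬝ᵥ C *ᵥ t = 2) (m : Fin r)
    (hm : (C *ᵥ t) m ≤ -1) : IsPosCoroot C (t + Pi.single m 1) := by
  have hm' : (C *ᵥ t) m = -1 := le_antisymm hm (neg_one_le hpd hsym hdiag hnn hq m)
  refine ⟨fun n => ?_, fun h0 => ?_, ?_⟩
  · have := hnn n
    rcases eq_or_ne n m with rfl | hn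
    · simp only [Pi.add_apply, Pi.single_eq_same]; omega
    · simp only [Pi.add_apply, Pi.single_eq_of_ne hn]; omega
  · have := congrFun h0 m
    simp at this
    have := hnn m
    omega
  · show (t + Pi.single m 1) ⬝ᵥ C *ᵥ (t + Pi.single m 1) = 2
    rw [q_add_single hsym hdiag, hq, hm']
    ring

private lemma support_step (hsym : Cᵀ = C) (hdiag : ∀ n, C n n = 2)
    (hoff : ∀ a b, a ≠ b → C a b = 0 ∨ C a b = -1)
    {t : Fin r → ℤ} (hnn : ∀ n, 0 ≤ t n) {b m : Fin r}
    (hb : 0 < t b) (he : C b m = -1) (hdom : 0 ≤ (C *ᵥ t) m) : 0 < t m := by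
  have hsym' : ∀ a b, C a b = C b a := by
    intro a b
    have := congrFun (congrFun hsym a) b
    rw [Matrix.transpose_apply] at this
    exact this.symm
  have hbm : b ≠ m := by
    intro h; rw [h, hdiag] at he; omega
  by_contra h
  push_neg at h
  have htm : t m = 0 := le_antisymm h (hnn m)
  have hsum : (C *ᵥ t) m = ∑ p ∈ Finset.univ.erase b, C m p * t p + C m b * t b := by
    rw [show (C *ᵥ t) m = ∑ p, C m p * t p from rfl, Finset.sum_erase_add _ _ (Finset.mem_univ b)]
  have h1 : C m b * t b < 0 := by
    rw [hsym' m b, he]; omega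
  have h2 : ∑ p ∈ Finset.univ.erase b, C m p * t p ≤ 0 := by
    apply Finset.sum_nonpos
    intro p hp
    rcases eq_or_ne p m with rfl | hpm
    · rw [hdiag, htm]; ring_nf; omega
    · rcases hoff m p (Ne.symm hpm) with h | h <;> rw [h] <;> nlinarith [hnn p]
  omega

private lemma full_support (hsym : Cᵀ = C) (hdiag : ∀ n, C n n = 2)
    (hoff : ∀ a b, a ≠ b → C a b = 0 ∨ C a b = -1)
    (hconn : ∀ a b : Fin r, Relation.ReflTransGen (fun a b => C a b = -1) a b)
    {t : Fin r → ℤ} (hnn : ∀ n, 0 ≤ t n) (ht : t ≠ 0)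
    (hdom : ∀ n, 0 ≤ (C *ᵥ t) n) (m : Fin r) : 0 < t m := by
  obtain ⟨n, hn⟩ := Function.ne_iff.mp ht
  have hn' : 0 < t n := lt_of_le_of_ne (hnn n) (by simpa using (Ne.symm hn))
  have path := hconn n m
  induction path with
  | refl => exact hn'
  | tail h e ih => exact support_step hsym hdiag hoff hnn ih e (hdom _)

end CorootAux2

/-- In the poset of dominant coroot-lattice coweights of a simple ADE Lie algebra
(Dynkin-label coordinates, order componentwise), any dominant coweight `λ` whose
Dynkin label is nonzero at an internal node `i` of valence `> 1` (witnessed by two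
distinct neighbours `j ≠ k` of `i`) has at least two distinct covers from above:
there exist two distinct positive coroots `θ ≠ θ'` such that `λ + θ` and `λ + θ'`
are dominant (the labels of `θ` being `C ·ᵥ θ`). -/
theorem internal_node_two_covers {r : ℕ} (C : Matrix (Fin r) (Fin r) ℤ)
    (hdiag : ∀ i, C i i = 2)
    (hoff : ∀ i j, i ≠ j → C i j = 0 ∨ C i j = -1)
    (hsym : C.transpose = C)
    (hpd : ∀ x : Fin r → ℚ, x ≠ 0 →
      0 < dotProduct x ((C.map (Int.cast : ℤ → ℚ)).mulVec x))
    (hconn : ∀ i j : Fin r, Relation.ReflTransGen (fun a b => C a b = -1) i j)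
    (lam : Fin r → ℤ)
    (hdom : ∀ i, 0 ≤ lam i)
    (hlat : ∃ v : Fin r → ℤ, C.mulVec v = lam)
    (i j k : Fin r) (hi : lam i ≠ 0)
    (hjk : j ≠ k) (hji : j ≠ i) (hki : k ≠ i)
    (hCj : C i j = -1) (hCk : C i k = -1) :
    ∃ θ θ' : Fin r → ℤ, θ ≠ θ' ∧ IsPosCoroot C θ ∧ IsPosCoroot C θ' ∧
      (∀ m, 0 ≤ lam m + C.mulVec θ m) ∧ (∀ m, 0 ≤ lam m + C.mulVec θ' m) := by
  classical
  -- mulVec is injective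
  have hinj : Function.Injective (C.mulVec) := by
    intro a b hab
    by_contra hne
    have hsub : a - b ≠ 0 := sub_ne_zero.mpr hne
    have h0 : C *ᵥ (a - b) = 0 := by rw [Matrix.mulVec_sub, hab, sub_self]
    have hq := qpos hpd hsub
    rw [h0] at hq
    simp [dotProduct] at hq
  -- any set of positive coroots is finite
  have hTfin : (Set.pi Set.univ fun _ : Fin r => Set.Icc (-2 : ℤ) 2).Finite :=
    Set.Finite.pi fun _ => Set.finite_Icc _ _
  have hPC_fin : ∀ S : Set (Fin r → ℤ), (∀ t ∈ S, IsPosCoroot C t) → S.Finite := by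
    intro S hS
    apply (hTfin.preimage hinj.injOn).subset
    intro t ht m _
    exact label_bound hpd hsym (hS t ht).2.2 m (hdiag m)
  -- the single vector at j is a positive coroot vanishing at i
  have ej_pc : IsPosCoroot C (Pi.single j 1) := by
    refine ⟨fun n => ?_, fun h0 => ?_, ?_⟩
    · rcases eq_or_ne n j with rfl | hn
      · simp
      · simp [Pi.single_eq_of_ne hn]
    · have := congrFun h0 j
      simp at this
    · show (Pi.single j 1 : Fin r → ℤ) ⬝ᵥ C *ᵥ Pi.single j 1 = 2
      rw [single_dotProduct, Matrix.mulVec_single]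
      simp [hdiag j]
  have hlami : 1 ≤ lam i := by have := hdom i; omega
  -- θ : maximal positive coroot vanishing at i
  set S1 : Set (Fin r → ℤ) := {t | IsPosCoroot C t ∧ t i = 0} with hS1def
  have hS1ne : S1.Nonempty := ⟨Pi.single j 1, ej_pc, Pi.single_eq_of_ne (Ne.symm hji) 1⟩
  obtain ⟨θ, hθS, hθmax⟩ :=
    Set.Finite.exists_maximalFor (fun t => ∑ m, t m) S1 (hPC_fin S1 (fun t ht => ht.1)) hS1ne
  -- θ' : maximal positive coroot
  set S2 : Set (Fin r → ℤ) := {t | IsPosCoroot C t} with hS2def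
  have hS2ne : S2.Nonempty := ⟨Pi.single j 1, ej_pc⟩
  obtain ⟨θ', hθ'S, hθ'max⟩ :=
    Set.Finite.exists_maximalFor (fun t => ∑ m, t m) S2 (hPC_fin S2 (fun t ht => ht)) hS2ne
  have sum_add_single : ∀ (t : Fin r → ℤ) (m : Fin r),
      (∑ n, ((t + Pi.single m 1 : Fin r → ℤ)) n) = (∑ n, t n) + 1 := by
    intro t m
    simp only [Pi.add_apply]
    rw [Finset.sum_add_distrib]
    simp
  -- labels of θ are nonnegative away from i
  have hθlab : ∀ m, m ≠ i → 0 ≤ (C *ᵥ θ) m := by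
    intro m hm
    by_contra h
    push_neg at h
    have hm1 : (C *ᵥ θ) m ≤ -1 := by omega
    have hu : IsPosCoroot C (θ + Pi.single m 1) :=
      step hpd hsym hdiag hθS.1.1 hθS.1.2.2 m hm1
    have huS : θ + Pi.single m 1 ∈ S1 := by
      refine ⟨hu, ?_⟩
      simp only [Pi.add_apply, Pi.single_eq_of_ne (Ne.symm hm)]
      rw [hθS.2]
      omega
    have := hθmax huS (by simp only [sum_add_single]; omega)
    simp only [sum_add_single] at this
    omega
  -- labels of θ' are nonnegative everywhere
  have hθ'lab : ∀ m, 0 ≤ (C *ᵥ θ') m := by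
    intro m
    by_contra h
    push_neg at h
    have hm1 : (C *ᵥ θ') m ≤ -1 := by omega
    have hu : IsPosCoroot C (θ' + Pi.single m 1) :=
      step hpd hsym hdiag hθ'S.1 hθ'S.2.2 m hm1
    have := hθ'max hu (by simp only [sum_add_single]; omega)
    simp only [sum_add_single] at this
    omega
  -- θ' has full support, hence differs from θ
  have hθ'full : 0 < θ' i :=
    full_support hsym hdiag hoff hconn hθ'S.1 hθ'S.2.1 hθ'lab i
  refine ⟨θ, θ', ?_, hθS.1, hθ'S, ?_, ?_⟩
  · intro h
    have h0 : θ i = 0 := hθS.2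
    rw [h] at h0
    omega
  · intro m
    rcases eq_or_ne m i with rfl | hm
    · have := neg_one_le hpd hsym hdiag hθS.1.1 hθS.1.2.2 m
      omega
    · have := hθlab m hm
      have := hdom m
      omega
  · intro m
    have := hθ'lab m
    have := hdom m
    omega
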